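/- For an ergodic Markov chain P with stationary distribution π, any initial configuration μ^{(0)} with total mass k, any vertex w, and any T > 0: |Σ_{t=0}^{T−1} (μ^{(0)} P^t)_w − k T π_w| ≤ (3/2) k t*, where t* = τ(1/4). -/

import Mathlib

open Finset


namespace CumVisitAux

set_option linter.unusedSectionVars false
variable {V : Type*} [Fintype V] [DecidableEq V] [Nonempty V]

lemma pow_entry_nonneg (P : Matrix V V ℝ) (hP0 : ∀ u v, 0 ≤ P u v) :
    ∀ (t : ℕ) (u v : V), 0 ≤ (P ^ t) u v := by
  intro t
  induction t with
  | zero =>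
    intro u v
    by_cases h : u = v <;> simp [Matrix.one_apply, h]
  | succ n ih =>
    intro u v
    rw [pow_succ, Matrix.mul_apply]
    exact Finset.sum_nonneg fun x _ => mul_nonneg (ih u x) (hP0 x v)

lemma pow_row_sum (P : Matrix V V ℝ) (hP1 : ∀ u, ∑ v, P u v = 1) :
    ∀ (t : ℕ) (u : V), ∑ v, (P ^ t) u v = 1 := by
  intro t
  induction t with
  | zero => intro u; simp [Matrix.one_apply]
  | succ n ih =>
    intro u
    calc ∑ v, (P ^ (n + 1)) u v = ∑ v, ∑ x, (P ^ n) u x * P x v := by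
          simp only [pow_succ, Matrix.mul_apply]
      _ = ∑ x, ∑ v, (P ^ n) u x * P x v := Finset.sum_comm
      _ = ∑ x, (P ^ n) u x * 1 := by
          refine Finset.sum_congr rfl fun x _ => ?_
          rw [← Finset.mul_sum, hP1]
      _ = 1 := by simp [ih]

lemma stat_pow (P : Matrix V V ℝ) (π : V → ℝ)
    (hstat : ∀ v, ∑ u, π u * P u v = π v) :
    ∀ (t : ℕ) (w : V), ∑ x, π x * (P ^ t) x w = π w := by
  intro t
  induction t with
  | zero => intro w; simp [Matrix.one_apply]
  | succ n ih =>
    intro w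
    calc ∑ x, π x * (P ^ (n + 1)) x w
        = ∑ x, ∑ y, π x * (P ^ n) x y * P y w := by
          simp only [pow_succ, Matrix.mul_apply, Finset.mul_sum, mul_assoc]
      _ = ∑ y, ∑ x, π x * (P ^ n) x y * P y w := Finset.sum_comm
      _ = ∑ y, (∑ x, π x * (P ^ n) x y) * P y w := by
          simp [Finset.sum_mul]
      _ = ∑ y, π y * P y w := by
          refine Finset.sum_congr rfl fun y _ => ?_
          rw [ih y]
      _ = π w := hstat w

lemma key_identity (P : Matrix V V ℝ) (π : V → ℝ)
    (hP1 : ∀ u, ∑ v, P u v = 1) (hπ1 : ∑ v, π v = 1)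
    (hstat : ∀ v, ∑ u, π u * P u v = π v)
    (c : V → ℝ) (s t : ℕ) (u w : V) :
    (P ^ (s + t)) u w - π w
      = ∑ x, ((P ^ s) u x - π x) * ((P ^ t) x w - c w) := by
  have h1 : ∑ x, (P ^ s) u x * (P ^ t) x w = (P ^ (s + t)) u w := by
    rw [pow_add, Matrix.mul_apply]
  have h2 : ∑ x, (P ^ s) u x = 1 := pow_row_sum P hP1 s u
  have h3 : ∑ x, π x * (P ^ t) x w = π w := stat_pow P π hstat t w
  simp only [sub_mul, mul_sub, Finset.sum_sub_distrib]
  rw [h1, h3, ← Finset.sum_mul, ← Finset.sum_mul, h2, hπ1]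
  ring

/-- The key inequality bounding `D (s+t)` via a product, with an arbitrary
row-adjustment function `c`. -/
lemma key_ineq (P : Matrix V V ℝ) (π : V → ℝ)
    (hP1 : ∀ u, ∑ v, P u v = 1) (hπ1 : ∑ v, π v = 1)
    (hstat : ∀ v, ∑ u, π u * P u v = π v)
    (c : V → ℝ) (s t : ℕ) (u : V) :
    ∑ w, |(P ^ (s + t)) u w - π w|
      ≤ ∑ x, |(P ^ s) u x - π x| * (∑ w, |(P ^ t) x w - c w|) := by
  calc ∑ w, |(P ^ (s + t)) u w - π w|
      = ∑ w, |∑ x, ((P ^ s) u x - π x) * ((P ^ t) x w - c w)| := by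
        refine Finset.sum_congr rfl fun w _ => ?_
        rw [key_identity P π hP1 hπ1 hstat c s t u w]
    _ ≤ ∑ w, ∑ x, |((P ^ s) u x - π x) * ((P ^ t) x w - c w)| :=
        Finset.sum_le_sum fun w _ => Finset.abs_sum_le_sum_abs _ _
    _ = ∑ x, ∑ w, |(P ^ s) u x - π x| * |(P ^ t) x w - c w| := by
        rw [Finset.sum_comm]; simp [abs_mul]
    _ = ∑ x, |(P ^ s) u x - π x| * (∑ w, |(P ^ t) x w - c w|) := by
        simp [Finset.mul_sum]

/-- Contraction step: if every row of `P^t0` is within `r` (in the adjusted ℓ¹ sense),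
then `D (s + t0) u ≤ r * D s u`. -/
lemma contract (P : Matrix V V ℝ) (π : V → ℝ)
    (hP1 : ∀ u, ∑ v, P u v = 1) (hπ1 : ∑ v, π v = 1)
    (hstat : ∀ v, ∑ u, π u * P u v = π v)
    (c : V → ℝ) (r : ℝ) (t0 : ℕ)
    (hr : ∀ x, ∑ w, |(P ^ t0) x w - c w| ≤ r) (s : ℕ) (u : V) :
    ∑ w, |(P ^ (s + t0)) u w - π w| ≤ r * ∑ x, |(P ^ s) u x - π x| := by
  calc ∑ w, |(P ^ (s + t0)) u w - π w|
      ≤ ∑ x, |(P ^ s) u x - π x| * (∑ w, |(P ^ t0) x w - c w|) :=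
        key_ineq P π hP1 hπ1 hstat c s t0 u
    _ ≤ ∑ x, |(P ^ s) u x - π x| * r :=
        Finset.sum_le_sum fun x _ => mul_le_mul_of_nonneg_left (hr x) (abs_nonneg _)
    _ = r * ∑ x, |(P ^ s) u x - π x| := by rw [← Finset.sum_mul]; ring

lemma D_le_two (P : Matrix V V ℝ) (π : V → ℝ)
    (hP0 : ∀ u v, 0 ≤ P u v) (hP1 : ∀ u, ∑ v, P u v = 1)
    (hπ0 : ∀ v, 0 ≤ π v) (hπ1 : ∑ v, π v = 1) (t : ℕ) (u : V) :
    ∑ v, |(P ^ t) u v - π v| ≤ 2 := by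
  calc ∑ v, |(P ^ t) u v - π v| ≤ ∑ v, ((P ^ t) u v + π v) := by
        refine Finset.sum_le_sum fun v _ => ?_
        calc |(P ^ t) u v - π v| ≤ |(P ^ t) u v| + |π v| := abs_sub _ _
          _ = (P ^ t) u v + π v := by
            rw [abs_of_nonneg (pow_entry_nonneg P hP0 t u v), abs_of_nonneg (hπ0 v)]
    _ = 2 := by rw [Finset.sum_add_distrib, pow_row_sum P hP1 t u, hπ1]; norm_num

lemma D_mono (P : Matrix V V ℝ) (π : V → ℝ)
    (hP0 : ∀ u v, 0 ≤ P u v) (hP1 : ∀ u, ∑ v, P u v = 1)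
    (hπ1 : ∑ v, π v = 1) (hstat : ∀ v, ∑ u, π u * P u v = π v)
    {s t : ℕ} (hst : s ≤ t) (u : V) :
    ∑ v, |(P ^ t) u v - π v| ≤ ∑ v, |(P ^ s) u v - π v| := by
  induction t, hst using Nat.le_induction with
  | base => exact le_refl _
  | succ n hn ih =>
    have h1 : ∀ x, ∑ w, |(P ^ 1) x w - (0 : V → ℝ) w| ≤ 1 := by
      intro x
      simp only [Pi.zero_apply, sub_zero, pow_one]
      rw [Finset.sum_congr rfl fun w _ => abs_of_nonneg (hP0 x w), hP1 x]
    have := contract P π hP1 hπ1 hstat 0 1 1 h1 n u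
    rw [one_mul] at this
    exact le_trans this ih

end CumVisitAux

/-- For an ergodic chain `P` with stationary distribution `π` and initial mass `k`,
`|Σ_{t=0}^{T−1} (μ^{(0)}P^t)_w − kTπ_w| ≤ (3/2) k t*`. -/
theorem cumulative_expected_visits_bound {V : Type*} [Fintype V] [DecidableEq V] [Nonempty V]
    (P : Matrix V V ℝ) (π : V → ℝ)
    (hP0 : ∀ u v, 0 ≤ P u v) (hP1 : ∀ u, ∑ v, P u v = 1)
    (herg : ∃ t0 : ℕ, ∀ u v, 0 < (P ^ t0) u v)
    (hπ0 : ∀ v, 0 ≤ π v) (hπ1 : ∑ v, π v = 1)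
    (hstat : ∀ v, ∑ u, π u * P u v = π v)
    (tstar : ℕ)
    (htstar : tstar = univ.sup fun u =>
      sInf {t : ℕ | (1 / 2) * ∑ v, |(P ^ t) u v - π v| ≤ (1 / 4 : ℝ)})
    (μ0 : V → ℝ) (hμ0 : ∀ v, 0 ≤ μ0 v)
    (k : ℝ) (hk : ∑ v, μ0 v = k)
    (w : V) (T : ℕ) (hT : 0 < T) :
    |(∑ t ∈ range T, ∑ u, μ0 u * (P ^ t) u w) - k * T * π w| ≤ (3 / 2) * k * tstar := by
  classical
  have hD0 : ∀ (t : ℕ) (u : V), (0:ℝ) ≤ ∑ v, |(P ^ t) u v - π v| :=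
    fun t u => Finset.sum_nonneg fun v _ => abs_nonneg _
  have hD2 : ∀ (t : ℕ) (u : V), ∑ v, |(P ^ t) u v - π v| ≤ 2 :=
    CumVisitAux.D_le_two P π hP0 hP1 hπ0 hπ1
  have hπle1 : ∀ v, π v ≤ 1 := by
    intro v; rw [← hπ1]
    exact Finset.single_le_sum (fun i _ => hπ0 i) (mem_univ v)
  -- Doeblin-type contraction gives nonemptiness of the mixing-time sets
  obtain ⟨t0, ht0⟩ := herg
  have hVne : (univ : Finset (V × V)).Nonempty := univ_nonempty
  set δ : ℝ := univ.inf' hVne (fun p : V × V => (P ^ t0) p.1 p.2) with hδ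
  have hδle : ∀ x v, δ ≤ (P ^ t0) x v := fun x v => Finset.inf'_le _ (mem_univ (x, v))
  have hδpos : 0 < δ := by
    rw [hδ, Finset.lt_inf'_iff]
    exact fun p _ => ht0 p.1 p.2
  have hδ1 : δ ≤ 1 := by
    obtain ⟨x0⟩ : Nonempty V := inferInstance
    have h1 : (P ^ t0) x0 x0 ≤ ∑ v, (P ^ t0) x0 v :=
      Finset.single_le_sum (fun v _ => CumVisitAux.pow_entry_nonneg P hP0 t0 x0 v) (mem_univ x0)
    have h2 := CumVisitAux.pow_row_sum P hP1 t0 x0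
    have h3 := hδle x0 x0
    linarith
  have hdoeb : ∀ x, ∑ v, |(P ^ t0) x v - δ * π v| ≤ 1 - δ := by
    intro x
    have he : ∀ v, |(P ^ t0) x v - δ * π v| = (P ^ t0) x v - δ * π v := by
      intro v
      refine abs_of_nonneg ?_
      have h1 : δ * π v ≤ δ * 1 := mul_le_mul_of_nonneg_left (hπle1 v) hδpos.le
      have h2 := hδle x v
      linarith
    have : ∑ v, |(P ^ t0) x v - δ * π v| = 1 - δ := by
      rw [Finset.sum_congr rfl fun v _ => he v, Finset.sum_sub_distrib,
        CumVisitAux.pow_row_sum P hP1 t0 x, ← Finset.mul_sum, hπ1, mul_one]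
    linarith
  have hiter : ∀ (m : ℕ) (u : V), ∑ v, |(P ^ (m * t0)) u v - π v| ≤ 2 * (1 - δ) ^ m := by
    intro m
    induction m with
    | zero => intro u; simpa using hD2 0 u
    | succ n ih =>
      intro u
      have h1 := CumVisitAux.contract P π hP1 hπ1 hstat (fun v => δ * π v) (1 - δ) t0 hdoeb
        (n * t0) u
      have h2 : (1 - δ) * ∑ x, |(P ^ (n * t0)) u x - π x| ≤ (1 - δ) * (2 * (1 - δ) ^ n) :=
        mul_le_mul_of_nonneg_left (ih u) (by linarith)
      have h3 : (n + 1) * t0 = n * t0 + t0 := by ring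
      rw [h3]
      calc ∑ v, |(P ^ (n * t0 + t0)) u v - π v|
          ≤ (1 - δ) * ∑ x, |(P ^ (n * t0)) u x - π x| := h1
        _ ≤ (1 - δ) * (2 * (1 - δ) ^ n) := h2
        _ = 2 * (1 - δ) ^ (n + 1) := by ring
  have hex : ∀ u : V, {t : ℕ | (1 / 2) * ∑ v, |(P ^ t) u v - π v| ≤ (1 / 4 : ℝ)}.Nonempty := by
    intro u
    obtain ⟨m, hm⟩ := exists_pow_lt_of_lt_one (show (0:ℝ) < 1/4 by norm_num)
      (show 1 - δ < 1 by linarith)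
    refine ⟨m * t0, ?_⟩
    have := hiter m u
    simp only [Set.mem_setOf_eq]
    linarith
  -- P^tstar is within 1/4 TV of π from every start
  have hmix : ∀ u : V, ∑ v, |(P ^ tstar) u v - π v| ≤ 1 / 2 := by
    intro u
    have hmem := Nat.sInf_mem (hex u)
    simp only [Set.mem_setOf_eq] at hmem
    have hle : sInf {t : ℕ | (1 / 2) * ∑ v, |(P ^ t) u v - π v| ≤ (1 / 4 : ℝ)} ≤ tstar := by
      rw [htstar]
      exact Finset.le_sup (f := fun u => sInf {t : ℕ | (1 / 2) * ∑ v, |(P ^ t) u v - π v| ≤ (1 / 4 : ℝ)}) (mem_univ u)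
    have := CumVisitAux.D_mono P π hP0 hP1 hπ1 hstat hle u
    linarith
  have hhalf : ∀ (s : ℕ) (u : V),
      ∑ v, |(P ^ (s + tstar)) u v - π v| ≤ (1/2) * ∑ v, |(P ^ s) u v - π v| := by
    intro s u
    refine CumVisitAux.contract P π hP1 hπ1 hstat π (1/2) tstar ?_ s u
    intro x
    exact hmix x
  -- the cumulative bound for each start u
  have hsum : ∀ u : V, ∑ t ∈ range T, ∑ v, |(P ^ t) u v - π v| ≤ 3 * tstar := by
    intro u
    rcases Nat.eq_zero_or_pos tstar with h0 | hpos
    · have hz : ∀ (s : ℕ) (u : V), ∑ v, |(P ^ s) u v - π v| = 0 := by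
        intro s u
        have h1 := hhalf s u
        rw [h0, add_zero] at h1
        have h2 := hD0 s u
        linarith
      rw [h0]
      simp [hz]
    · have hq : ∀ q, 1 ≤ q → ∀ u : V,
          ∑ v, |(P ^ (q * tstar)) u v - π v| ≤ (1/2:ℝ) ^ q := by
        intro q hq1
        induction q, hq1 using Nat.le_induction with
        | base => intro u; rw [one_mul]; simpa using hmix u
        | succ n hn ih =>
          intro u
          have h3 : (n + 1) * tstar = n * tstar + tstar := by ring
          rw [h3]
          calc ∑ v, |(P ^ (n * tstar + tstar)) u v - π v|
              ≤ (1/2) * ∑ v, |(P ^ (n * tstar)) u v - π v| := hhalf _ u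
            _ ≤ (1/2) * (1/2:ℝ) ^ n := by
                have := ih u
                linarith
            _ = (1/2:ℝ) ^ (n + 1) := by ring
      have hlate : ∀ (t : ℕ) (u : V), tstar ≤ t →
          ∑ v, |(P ^ t) u v - π v| ≤ (1/2:ℝ) ^ (t / tstar) := by
        intro t u ht'
        have h1 : 1 ≤ t / tstar := (Nat.one_le_div_iff hpos).2 ht'
        have h2 : t / tstar * tstar ≤ t := Nat.div_mul_le_self t tstar
        exact le_trans (CumVisitAux.D_mono P π hP0 hP1 hπ1 hstat h2 u) (hq _ h1 u)
      set g : ℕ → ℝ := fun t => if t < tstar then 2 else (1/2:ℝ) ^ (t / tstar) with hg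
      have hgle : ∀ t : ℕ, ∑ v, |(P ^ t) u v - π v| ≤ g t := by
        intro t
        by_cases h : t < tstar
        · simp only [hg, if_pos h]; exact hD2 t u
        · simp only [hg, if_neg h]; exact hlate t u (not_lt.mp h)
      have hg0 : ∀ t : ℕ, 0 ≤ g t := by
        intro t
        by_cases h : t < tstar
        · simp only [hg, if_pos h]; norm_num
        · simp only [hg, if_neg h]; positivity
      have hblocks : ∀ Q, 1 ≤ Q →
          ∑ t ∈ range (Q * tstar), g t ≤ 3 * tstar - 2 * tstar * (1/2:ℝ) ^ Q := by
        intro Q hQ1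
        induction Q, hQ1 using Nat.le_induction with
        | base =>
          rw [one_mul]
          have hcg : ∀ t ∈ range tstar, g t = 2 := by
            intro t ht'
            simp only [hg, if_pos (mem_range.mp ht')]
          rw [Finset.sum_congr rfl hcg, Finset.sum_const, card_range, nsmul_eq_mul]
          have : (1/2:ℝ) ^ 1 = 1/2 := by norm_num
          rw [this]
          ring_nf
          linarith
        | succ n hn ih =>
          have hmono : n * tstar ≤ (n + 1) * tstar := Nat.mul_le_mul_right tstar (Nat.le_succ n)
          have hsplit : ∑ t ∈ range ((n + 1) * tstar), g t
              = ∑ t ∈ range (n * tstar), g t + ∑ t ∈ Ico (n * tstar) ((n + 1) * tstar), g t := by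
            rw [range_eq_Ico, range_eq_Ico]
            exact (Finset.sum_Ico_consecutive g (Nat.zero_le _) hmono).symm
          have hval : ∀ t ∈ Ico (n * tstar) ((n + 1) * tstar), g t = (1/2:ℝ) ^ n := by
            intro t ht'
            obtain ⟨h1, h2⟩ := mem_Ico.mp ht'
            have hts : tstar ≤ n * tstar := by
              have := Nat.mul_le_mul_right tstar hn
              omega
            have hnt : ¬ t < tstar := by omega
            have hdiv : t / tstar = n := Nat.div_eq_of_lt_le h1 h2
            simp only [hg, if_neg hnt, hdiv]
          have hcard : (n + 1) * tstar - n * tstar = tstar := by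
            rw [add_mul, one_mul]; omega
          rw [hsplit, Finset.sum_congr rfl hval, Finset.sum_const, Nat.card_Ico, hcard,
            nsmul_eq_mul]
          have hp : (1/2:ℝ) ^ (n + 1) = (1/2) * (1/2:ℝ) ^ n := by ring
          rw [hp] at *
          linarith
      set Q : ℕ := T / tstar + 1 with hQ
      have hTQ : T ≤ Q * tstar := by
        have h1 : tstar * (T / tstar) + T % tstar = T := Nat.div_add_mod T tstar
        have h2 : T % tstar < tstar := Nat.mod_lt T hpos
        calc T = tstar * (T / tstar) + T % tstar := h1.symm
          _ ≤ tstar * (T / tstar) + tstar := by omega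
          _ = (T / tstar + 1) * tstar := by ring
      have hpow0 : (0:ℝ) ≤ 2 * tstar * (1/2:ℝ) ^ Q := by positivity
      calc ∑ t ∈ range T, ∑ v, |(P ^ t) u v - π v|
          ≤ ∑ t ∈ range T, g t := Finset.sum_le_sum fun t _ => hgle t
        _ ≤ ∑ t ∈ range (Q * tstar), g t :=
            Finset.sum_le_sum_of_subset_of_nonneg (Finset.range_subset_range.2 hTQ)
              (fun i _ _ => hg0 i)
        _ ≤ 3 * tstar - 2 * tstar * (1/2:ℝ) ^ Q := hblocks Q (Nat.le_add_left 1 _)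
        _ ≤ 3 * tstar := by linarith
  -- pointwise bound at w, summed over time
  have hsum2 : ∀ u : V, ∑ t ∈ range T, |(P ^ t) u w - π w| ≤ (3/2) * tstar := by
    intro u
    have hhalfpt : ∀ t : ℕ, |(P ^ t) u w - π w| ≤ (1/2) * ∑ v, |(P ^ t) u v - π v| := by
      intro t
      have hsum0 : ∑ v, ((P ^ t) u v - π v) = 0 := by
        rw [Finset.sum_sub_distrib, CumVisitAux.pow_row_sum P hP1 t u, hπ1]
        ring
      have htot : ((P ^ t) u w - π w) + ∑ v ∈ univ.erase w, ((P ^ t) u v - π v)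
          = ∑ v, ((P ^ t) u v - π v) :=
        Finset.add_sum_erase univ (fun v => (P ^ t) u v - π v) (mem_univ w)
      have h1 : ((P ^ t) u w - π w) + ∑ v ∈ univ.erase w, ((P ^ t) u v - π v) = 0 := by
        rw [htot]; exact hsum0
      have h2 : |(P ^ t) u w - π w| ≤ ∑ v ∈ univ.erase w, |(P ^ t) u v - π v| := by
        have he : (P ^ t) u w - π w = -∑ v ∈ univ.erase w, ((P ^ t) u v - π v) := by
          linarith
        rw [he, abs_neg]
        exact Finset.abs_sum_le_sum_abs _ _
      have h3 : |(P ^ t) u w - π w| + ∑ v ∈ univ.erase w, |(P ^ t) u v - π v|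
          = ∑ v, |(P ^ t) u v - π v| :=
        Finset.add_sum_erase univ (fun v => |(P ^ t) u v - π v|) (mem_univ w)
      linarith
    calc ∑ t ∈ range T, |(P ^ t) u w - π w|
        ≤ ∑ t ∈ range T, (1/2) * ∑ v, |(P ^ t) u v - π v| :=
          Finset.sum_le_sum fun t _ => hhalfpt t
      _ = (1/2) * ∑ t ∈ range T, ∑ v, |(P ^ t) u v - π v| := by rw [← Finset.mul_sum]
      _ ≤ (1/2) * (3 * tstar) := by
          have := hsum u
          linarith
      _ = (3/2) * tstar := by ring
  -- assemble
  have hrw : (∑ t ∈ range T, ∑ u, μ0 u * (P ^ t) u w) - k * T * π w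
      = ∑ u, μ0 u * (∑ t ∈ range T, ((P ^ t) u w - π w)) := by
    have hper : ∀ u : V, μ0 u * (∑ t ∈ range T, ((P ^ t) u w - π w))
        = (∑ t ∈ range T, μ0 u * (P ^ t) u w) - μ0 u * (T * π w) := by
      intro u
      rw [Finset.sum_sub_distrib, Finset.sum_const, card_range, nsmul_eq_mul, mul_sub,
        Finset.mul_sum]
    rw [Finset.sum_congr rfl fun u _ => hper u, Finset.sum_sub_distrib, Finset.sum_comm,
      ← Finset.sum_mul, hk]
    ring
  rw [hrw]
  calc |∑ u, μ0 u * (∑ t ∈ range T, ((P ^ t) u w - π w))|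
      ≤ ∑ u, |μ0 u * (∑ t ∈ range T, ((P ^ t) u w - π w))| :=
        Finset.abs_sum_le_sum_abs _ _
    _ ≤ ∑ u, μ0 u * ((3/2) * tstar) := by
        refine Finset.sum_le_sum fun u _ => ?_
        rw [abs_mul, abs_of_nonneg (hμ0 u)]
        refine mul_le_mul_of_nonneg_left ?_ (hμ0 u)
        exact le_trans (Finset.abs_sum_le_sum_abs _ _) (hsum2 u)
    _ = (3/2) * k * tstar := by rw [← Finset.sum_mul, hk]; ring
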